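/- Let n = 2p be even and let e_1, …, e_r (1 ≤ r ≤ p − 1) be pairwise non-adjacent edges of K_n (no two sharing an endpoint). Then a(K_n \ {e_1, …, e_r}; x) = a(K_n; x); more precisely, a nonempty set S of vertices is a strong defensive alliance in K_n \ {e_1, …, e_r} (with connected induced subgraph) if and only if |S| ≥ p + 1, so a_k(K_n \ {e_1, …, e_r}) = a_k(K_n) for every k. -/
import Mathlib


open SimpleGraph Polynomial Finset

/-- `δ_S(v)`: the number of neighbors of `v` lying in the set `S`. -/
noncomputable def degIn {V : Type*} (G : SimpleGraph V) (S : Finset V) (v : V) : ℕ :=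
  ((S : Set V) ∩ G.neighborSet v).ncard

/-- `δ(v)`: the degree of `v` in `G`. -/
noncomputable def degOf {V : Type*} (G : SimpleGraph V) (v : V) : ℕ :=
  (G.neighborSet v).ncard

/-- `S` is a strong defensive alliance in `G`: `S` is nonempty and every `v ∈ S`
satisfies `2·δ_S(v) ≥ δ(v)`. -/
def IsStrongAlliance {V : Type*} (G : SimpleGraph V) (S : Finset V) : Prop :=
  S.Nonempty ∧ ∀ v ∈ S, degOf G v ≤ 2 * degIn G S v

/-- The alliances counted by the strong alliance polynomial: strong defensive alliances
whose induced subgraph is connected. -/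
def IsCountedAlliance {V : Type*} (G : SimpleGraph V) (S : Finset V) : Prop :=
  IsStrongAlliance G S ∧ (G.induce (S : Set V)).Connected

/-- `a_k(G)`: the number of strong defensive alliances of cardinality `k` in `G`
whose induced subgraph is connected. -/
noncomputable def aCoeff {V : Type*} (G : SimpleGraph V) (k : ℕ) : ℕ :=
  {S : Finset V | S.card = k ∧ IsCountedAlliance G S}.ncard

/-- The strong alliance polynomial `a(G;x) = Σ_k a_k(G) x^k`. -/
noncomputable def alliancePoly {V : Type*} [Fintype V] (G : SimpleGraph V) : Polynomial ℤ :=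
  ∑ k ∈ Finset.range (Fintype.card V + 1), Polynomial.C (aCoeff G k : ℤ) * Polynomial.X ^ k

/-- Let `n = 2p` be even and let `M = {e_1, …, e_r}` with `1 ≤ r ≤ p − 1` be
pairwise non-adjacent edges of `K_n` (no two sharing an endpoint).  Then a nonempty vertex
set `S` is a strong defensive alliance in `K_n \ M` (with connected induced subgraph) iff
`|S| ≥ p + 1`; so `a_k(K_n \ M) = a_k(K_n)` for every `k`, and
`a(K_n \ M; x) = a(K_n; x)`. -/
lemma degIn_eq {n : ℕ} (M : Finset (Sym2 (Fin n))) (S : Finset (Fin n)) (v : Fin n) :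
    degIn ((⊤ : SimpleGraph (Fin n)).deleteEdges ↑M) S v
      = (S.filter (fun w => v ≠ w ∧ s(v,w) ∉ M)).card := by
  rw [degIn, show (S : Set (Fin n)) ∩ ((⊤ : SimpleGraph (Fin n)).deleteEdges ↑M).neighborSet v
      = ↑(S.filter (fun w => v ≠ w ∧ s(v,w) ∉ M)) from ?_, Set.ncard_coe_finset]
  ext w
  simp only [Set.mem_inter_iff, Finset.mem_coe, mem_neighborSet, deleteEdges_adj, top_adj,
    Set.mem_setOf_eq, mem_filter, Finset.mem_coe, ne_eq]

lemma degOf_eq_degIn {V : Type*} [Fintype V] (G : SimpleGraph V) (v : V) :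
    degOf G v = degIn G Finset.univ v := by
  simp [degOf, degIn]

lemma count_eq {n : ℕ} (M : Finset (Sym2 (Fin n)))
    (hM : ∀ e ∈ M, e ∈ (⊤ : SimpleGraph (Fin n)).edgeSet)
    (S : Finset (Fin n)) (v : Fin n) (hv : v ∈ S) :
    (S.filter (fun w => v ≠ w ∧ s(v,w) ∉ M)).card
      + (S.filter (fun w => s(v,w) ∈ M)).card + 1 = S.card := by
  have hvv : s(v,v) ∉ M := by
    intro h
    have := hM _ h
    rw [SimpleGraph.mem_edgeSet] at this
    exact this.ne rfl
  have hkey := Finset.card_filter_add_card_filter_not (s := S.erase v)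
      (p := fun w => s(v,w) ∉ M)
  have h1 : S.filter (fun w => v ≠ w ∧ s(v,w) ∉ M)
      = (S.erase v).filter (fun w => s(v,w) ∉ M) := by
    ext w
    simp only [mem_filter, mem_erase, ne_eq]
    constructor
    · rintro ⟨ha, hb, hc⟩; exact ⟨⟨fun h => hb h.symm, ha⟩, hc⟩
    · rintro ⟨⟨ha, hb⟩, hc⟩; exact ⟨hb, fun h => ha h.symm, hc⟩
  have h2 : S.filter (fun w => s(v,w) ∈ M)
      = (S.erase v).filter (fun w => ¬ s(v,w) ∉ M) := by
    ext w
    simp only [mem_filter, mem_erase, not_not, ne_eq]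
    constructor
    · rintro ⟨ha, hc⟩
      refine ⟨⟨fun h => ?_, ha⟩, hc⟩
      subst h; exact hvv hc
    · rintro ⟨⟨ha, hb⟩, hc⟩; exact ⟨hb, hc⟩
  have hc1 : 1 ≤ S.card := card_pos.mpr ⟨v, hv⟩
  have hce := Finset.card_erase_of_mem hv
  rw [h1, h2, hkey, hce]
  omega

lemma bad_le_one {n : ℕ} (M : Finset (Sym2 (Fin n)))
    (hmatch : ∀ e ∈ M, ∀ f ∈ M, e ≠ f → ∀ v : Fin n, v ∈ e → v ∉ f)
    (S : Finset (Fin n)) (v : Fin n) :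
    (S.filter (fun w => s(v,w) ∈ M)).card ≤ 1 := by
  apply Finset.card_le_one.mpr
  intro a ha b hb
  simp only [mem_filter] at ha hb
  by_contra hne
  have hef : s(v,a) ≠ s(v,b) := fun h => hne (Sym2.congr_right.mp h)
  exact hmatch _ ha.2 _ hb.2 hef v (Sym2.mem_mk_left v a) (Sym2.mem_mk_left v b)

lemma key_lemma {p : ℕ} (hp : 2 ≤ p) (M : Finset (Sym2 (Fin (2 * p))))
    (hM : ∀ e ∈ M, e ∈ (⊤ : SimpleGraph (Fin (2 * p))).edgeSet)
    (hmatch : ∀ e ∈ M, ∀ f ∈ M, e ≠ f → ∀ v : Fin (2 * p), v ∈ e → v ∉ f)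
    (hr2 : M.card ≤ p - 1)
    (S : Finset (Fin (2 * p))) (hS : S.Nonempty) :
    IsCountedAlliance ((⊤ : SimpleGraph (Fin (2 * p))).deleteEdges ↑M) S ↔ p + 1 ≤ S.card := by
  have hcardu : (Finset.univ : Finset (Fin (2 * p))).card = 2 * p := by simp
  constructor
  · rintro ⟨⟨-, hall⟩, -⟩
    by_contra hlt
    push_neg at hlt
    have hkey : ∀ v ∈ S, S.card = p ∧ (S.filter (fun w => s(v,w) ∈ M)).card = 0 ∧
        ((Finset.univ : Finset (Fin (2 * p))).filter (fun w => s(v,w) ∈ M)).card = 1 := by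
      intro v hv
      have h1 := count_eq M hM S v hv
      have h2 := count_eq M hM Finset.univ v (mem_univ v)
      have h3 : (S.filter (fun w => s(v,w) ∈ M)).card
          ≤ ((Finset.univ : Finset (Fin (2*p))).filter (fun w => s(v,w) ∈ M)).card :=
        card_le_card (filter_subset_filter _ (subset_univ S))
      have h4 := bad_le_one M hmatch Finset.univ v
      have h5 := hall v hv
      rw [degOf_eq_degIn, degIn_eq, degIn_eq] at h5
      omega
    have hle : S.card ≤ M.card := by
      have hsub : S ⊆ M.biUnion (fun e => S.filter (fun w => w ∈ e)) := by
        intro v hv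
        obtain ⟨-, -, hb1⟩ := hkey v hv
        have hne : ((Finset.univ : Finset (Fin (2*p))).filter
            (fun w => s(v,w) ∈ M)).Nonempty := by
          rw [← card_pos, hb1]; norm_num
        obtain ⟨w, hw⟩ := hne
        simp only [mem_filter] at hw
        refine mem_biUnion.mpr ⟨s(v,w), hw.2, mem_filter.mpr ⟨hv, Sym2.mem_mk_left v w⟩⟩
      calc S.card ≤ (M.biUnion fun e => S.filter (fun w => w ∈ e)).card := card_le_card hsub
        _ ≤ ∑ e ∈ M, (S.filter (fun w => w ∈ e)).card := card_biUnion_le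
        _ ≤ ∑ _e ∈ M, 1 := by
            refine sum_le_sum (fun e he => ?_)
            apply card_le_one.mpr
            intro a ha b hb
            simp only [mem_filter] at ha hb
            by_contra hne
            have heab : e = s(a,b) := (Sym2.mem_and_mem_iff hne).mp ⟨ha.2, hb.2⟩
            have hb0 := (hkey a ha.1).2.1
            have hmem : b ∈ S.filter (fun w => s(a,w) ∈ M) :=
              mem_filter.mpr ⟨hb.1, by rw [← heab]; exact he⟩
            rw [card_eq_zero] at hb0
            simp [hb0] at hmem
        _ = M.card := by simp
    obtain ⟨v, hv⟩ := hS
    have := (hkey v hv).1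
    omega
  · intro hcard
    have hS3 : 3 ≤ S.card := by omega
    have hbadS : ∀ v : Fin (2*p), (S.filter (fun w => s(v,w) ∈ M)).card ≤ 1 :=
      fun v => bad_le_one M hmatch S v
    constructor
    · refine ⟨hS, fun v hv => ?_⟩
      rw [degOf_eq_degIn, degIn_eq, degIn_eq]
      have h1 := count_eq M hM S v hv
      have h2 := count_eq M hM Finset.univ v (mem_univ v)
      have h3 : (S.filter (fun w => s(v,w) ∈ M)).card
          ≤ ((Finset.univ : Finset (Fin (2*p))).filter (fun w => s(v,w) ∈ M)).card :=
        card_le_card (filter_subset_filter _ (subset_univ S))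
      have h4 := bad_le_one M hmatch Finset.univ v
      omega
    · rw [connected_iff]
      refine ⟨?_, ⟨⟨hS.choose, hS.choose_spec⟩⟩⟩
      intro u w
      by_cases h0 : u = w
      · rw [h0]
      have hu : (u : Fin (2*p)) ∈ S := u.2
      have hw : (w : Fin (2*p)) ∈ S := w.2
      have hne : (u : Fin (2*p)) ≠ (w : Fin (2*p)) := fun h => h0 (Subtype.ext h)
      have hadj : ∀ a b : Fin (2*p), a ≠ b → s(a,b) ∉ M →
          ((⊤ : SimpleGraph (Fin (2 * p))).deleteEdges ↑M).Adj a b := by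
        intro a b hab hm
        rw [deleteEdges_adj]
        exact ⟨hab, hm⟩
      by_cases h1 : s((u : Fin (2*p)), (w : Fin (2*p))) ∈ M
      · -- go through a third vertex
        have hzex : (((S.erase u).erase w)).Nonempty := by
          rw [← card_pos]
          have e1 : (w : Fin (2*p)) ∈ S.erase u := mem_erase.mpr ⟨fun h => hne h.symm, hw⟩
          have c1 := card_erase_of_mem (show (u:Fin (2*p)) ∈ S from hu)
          have c2 := card_erase_of_mem e1
          omega
        obtain ⟨z, hz⟩ := hzex
        rw [mem_erase, mem_erase] at hz
        obtain ⟨hzw, hzu, hzS⟩ := hz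
        have hzu' : s((u : Fin (2*p)), z) ∉ M := by
          intro hmem
          have hw' : (w : Fin (2*p)) ∈ S.filter (fun x => s((u:Fin (2*p)), x) ∈ M) :=
            mem_filter.mpr ⟨hw, h1⟩
          have hz' : z ∈ S.filter (fun x => s((u:Fin (2*p)), x) ∈ M) :=
            mem_filter.mpr ⟨hzS, hmem⟩
          exact hzw (card_le_one.mp (hbadS u) _ hz' _ hw')
        have hzw' : s((w : Fin (2*p)), z) ∉ M := by
          intro hmem
          have h1' : s((w : Fin (2*p)), (u : Fin (2*p))) ∈ M := by
            rwa [Sym2.eq_swap] at h1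
          have hu' : (u : Fin (2*p)) ∈ S.filter (fun x => s((w:Fin (2*p)), x) ∈ M) :=
            mem_filter.mpr ⟨hu, h1'⟩
          have hz' : z ∈ S.filter (fun x => s((w:Fin (2*p)), x) ∈ M) :=
            mem_filter.mpr ⟨hzS, hmem⟩
          exact hzu (card_le_one.mp (hbadS w) _ hz' _ hu')
        have a1 : (((⊤ : SimpleGraph (Fin (2 * p))).deleteEdges ↑M).induce
            (S : Set (Fin (2*p)))).Adj u ⟨z, hzS⟩ :=
          SimpleGraph.comap_adj.mpr (hadj _ _ (fun h => hzu h.symm) hzu')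
        have a2 : (((⊤ : SimpleGraph (Fin (2 * p))).deleteEdges ↑M).induce
            (S : Set (Fin (2*p)))).Adj ⟨z, hzS⟩ w :=
          SimpleGraph.comap_adj.mpr
            ((hadj _ _ (fun h => hzw h.symm) hzw').symm)
        exact a1.reachable.trans a2.reachable
      · exact (SimpleGraph.comap_adj.mpr (hadj _ _ hne h1)).reachable

theorem stmt_18 (p : ℕ) (M : Finset (Sym2 (Fin (2 * p))))
    (hM : ∀ e ∈ M, e ∈ (⊤ : SimpleGraph (Fin (2 * p))).edgeSet)
    (hmatch : ∀ e ∈ M, ∀ f ∈ M, e ≠ f → ∀ v : Fin (2 * p), v ∈ e → v ∉ f)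
    (hr1 : 1 ≤ M.card) (hr2 : M.card ≤ p - 1) :
    (∀ S : Finset (Fin (2 * p)), S.Nonempty →
      (IsCountedAlliance ((⊤ : SimpleGraph (Fin (2 * p))).deleteEdges ↑M) S ↔
        p + 1 ≤ S.card)) ∧
    (∀ k : ℕ, aCoeff ((⊤ : SimpleGraph (Fin (2 * p))).deleteEdges ↑M) k =
      aCoeff (⊤ : SimpleGraph (Fin (2 * p))) k) ∧
    alliancePoly ((⊤ : SimpleGraph (Fin (2 * p))).deleteEdges ↑M) =
      alliancePoly (⊤ : SimpleGraph (Fin (2 * p))) := by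
  have hp : 2 ≤ p := by omega
  have hkeyM := key_lemma hp M hM hmatch hr2
  have hT : ((⊤ : SimpleGraph (Fin (2*p))).deleteEdges
      ↑(∅ : Finset (Sym2 (Fin (2*p))))) = (⊤ : SimpleGraph (Fin (2*p))) := by
    simp
  have hkeyT : ∀ S : Finset (Fin (2*p)), S.Nonempty →
      (IsCountedAlliance (⊤ : SimpleGraph (Fin (2*p))) S ↔ p + 1 ≤ S.card) := by
    intro S hS
    rw [← hT]
    exact key_lemma hp ∅ (by simp) (by simp) (by simp) S hS
  have h2 : ∀ k : ℕ, aCoeff ((⊤ : SimpleGraph (Fin (2 * p))).deleteEdges ↑M) k =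
      aCoeff (⊤ : SimpleGraph (Fin (2 * p))) k := by
    intro k
    unfold aCoeff
    congr 1
    ext S
    simp only [Set.mem_setOf_eq]
    constructor
    · rintro ⟨hc, hA⟩
      exact ⟨hc, (hkeyT S hA.1.1).mpr ((hkeyM S hA.1.1).mp hA)⟩
    · rintro ⟨hc, hA⟩
      exact ⟨hc, (hkeyM S hA.1.1).mpr ((hkeyT S hA.1.1).mp hA)⟩
  refine ⟨hkeyM, h2, ?_⟩
  unfold alliancePoly
  exact Finset.sum_congr rfl (fun k _ => by rw [h2 k])
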